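/- Define sequences T₁(n), N(n) of polynomials in ℤ[x,y] by T₁(0) = 1, N(0) = 1, T₁(n) = y·T₁(n-1)² + 2·T₁(n-1)·N(n-1) + (x-1)·N(n-1)², N(n) = 2·T₁(n-1)·N(n-1) + (x-1)·N(n-1)². Then for every n ≥ 0, evaluating T(n) := T₁(n) + (x-1)·N(n) at y = 0 gives T(n)(x,0) = x·(x+1)^{2^n - 1}. -/
import Mathlib


open Polynomial

/-- In `ℤ[x][y]` (outer variable `y = X`, inner variable `x = C X`), define
`T₁ 0 = 1`, `N 0 = 1`, `T₁ (n+1) = y·T₁ n² + 2·T₁ n·N n + (x-1)·N n²`,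
`N (n+1) = 2·T₁ n·N n + (x-1)·N n²`, and set `T n = T₁ n + (x-1)·N n`.
Then evaluating at `y = 0` gives `T n (x, 0) = x·(x+1)^(2^n - 1)`. -/
theorem farey_tutte_at_y_zero
    (T₁ N : ℕ → Polynomial (Polynomial ℤ))
    (h10 : T₁ 0 = 1) (hN0 : N 0 = 1)
    (h1 : ∀ n, T₁ (n + 1) =
      X * (T₁ n) ^ 2 + 2 * T₁ n * N n + (C X - 1) * (N n) ^ 2)
    (hN : ∀ n, N (n + 1) = 2 * T₁ n * N n + (C X - 1) * (N n) ^ 2) :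
    ∀ n, (T₁ n + (C X - 1) * N n).eval 0 = X * (X + 1) ^ (2 ^ n - 1) := by
  have key : ∀ n, (T₁ n).eval 0 = (X + 1) ^ (2 ^ n - 1) ∧
      (N n).eval 0 = (X + 1) ^ (2 ^ n - 1) := by
    intro n
    induction n with
    | zero => simp [h10, hN0]
    | succ n ih =>
      obtain ⟨hT, hNn⟩ := ih
      have hpow : (2 : ℕ) ^ n - 1 + (2 ^ n - 1) + 1 = 2 ^ (n + 1) - 1 := by
        have : 1 ≤ 2 ^ n := Nat.one_le_two_pow
        omega
      have hval : (2 * T₁ n * N n + (C X - 1) * (N n) ^ 2).eval 0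
          = (X + 1) ^ (2 ^ (n + 1) - 1) := by
        simp only [eval_add, eval_mul, eval_pow, eval_ofNat, eval_sub, eval_C,
          eval_one, hT, hNn]
        rw [← hpow]
        ring
      constructor
      · rw [h1 n]
        simp only [eval_add, eval_mul, eval_pow, eval_X, zero_mul, eval_ofNat,
          eval_sub, eval_C, eval_one, hT, hNn]
        rw [← hpow]; ring
      · rw [hN n, hval]
  intro n
  obtain ⟨hT, hNn⟩ := key n
  rw [eval_add, eval_mul, hT, hNn, eval_sub, eval_C, eval_one]
  ring
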